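/- arXiv:2509.03688 — 5 statements merged into one kernel-verified Lean document; each statement's English description precedes it below -/
import Mathlib

section
/- Let k ∈ ℕ and let f : [ℕ]² → 2 be a coloring which is transitive for color 0 (i.e., for all x < y < z, if f(x,y) = f(y,z) = 0 then f(x,z) = 0), and suppose there is no f-homogeneous set of size k for color 1. Then there exists a coloring g : ℕ → C with C = k(k+1)/2 colors such that for every i < C, the set g⁻¹(i) is f-homogeneous for color 0. -/
/-- `H` is `f`-homogeneous for color `c`. -/
def Homog (f : ℕ → ℕ → Fin 2) (c : Fin 2) (H : Set ℕ) : Prop :=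
  ∀ x ∈ H, ∀ y ∈ H, x < y → f x y = c

lemma fin2_cases (a : Fin 2) : a = 0 ∨ a = 1 := by revert a; decide

/-- Finite Dilworth (Galvin's proof): a finite set with all `1`-homogeneous
subsets of size ≤ w can be colored with < w colors so that classes are 0-chains. -/
lemma galvin (f : ℕ → ℕ → Fin 2)
    (htrans : ∀ x y z : ℕ, x < y → y < z → f x y = 0 → f y z = 0 → f x z = 0) :
    ∀ (n w : ℕ) (S : Finset ℕ), S.card ≤ n →
      (∀ T : Finset ℕ, T ⊆ S → Homog f 1 ↑T → T.card ≤ w) →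
      ∃ g : ℕ → ℕ, (∀ x ∈ S, g x < w) ∧
        (∀ x ∈ S, ∀ y ∈ S, x < y → g x = g y → f x y = 0) := by
  intro n
  induction n with
  | zero =>
    intro w S hS _
    have hE : S = ∅ := Finset.card_eq_zero.mp (Nat.le_zero.mp hS)
    exact ⟨fun _ => 0, by simp [hE], by simp [hE]⟩
  | succ n ih =>
    intro w S hS hbound
    rcases S.eq_empty_or_nonempty with rfl | hne
    · exact ⟨fun _ => 0, by simp, by simp⟩
    classical
    set m := S.max' hne with hm
    have hmS : m ∈ S := S.max'_mem hne
    set S' := S.erase m with hS'def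
    have hS'sub : S' ⊆ S := Finset.erase_subset _ _
    have hS'card : S'.card ≤ n := by
      have h1 : S'.card = S.card - 1 := by
        rw [hS'def]; exact Finset.card_erase_of_mem hmS
      have h2 : 1 ≤ S.card := Finset.card_pos.mpr hne
      omega
    have hbound' : ∀ T : Finset ℕ, T ⊆ S' → Homog f 1 ↑T → T.card ≤ w :=
      fun T hT h => hbound T (hT.trans hS'sub) h
    have hltm : ∀ x ∈ S', x < m := by
      intro x hx
      exact lt_of_le_of_ne (S.le_max' x (hS'sub hx)) (Finset.ne_of_mem_erase hx)
    have hw1 : 1 ≤ w := by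
      have h := hbound {m} (by simpa using hmS) (by
        intro x hx y hy hxy
        simp only [Finset.coe_singleton, Set.mem_singleton_iff] at hx hy
        omega)
      simpa using h
    by_cases H : ∃ T : Finset ℕ, T ⊆ S' ∧ Homog f 1 ↑T ∧ T.card = w
    · -- width of S' is exactly w
      obtain ⟨T0, hT0sub, hT0hom, hT0card⟩ := H
      obtain ⟨g', hg'lt, hg'val⟩ := ih w S' hS'card hbound'
      -- every w-antichain of S' meets every color class
      have meet : ∀ T : Finset ℕ, T ⊆ S' → Homog f 1 ↑T → T.card = w →
          ∀ i, i < w → ∃ z ∈ T, g' z = i := by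
        intro T hT hhom hcard i hi
        have hinj : Set.InjOn g' ↑T := by
          intro p hp q hq hpq
          by_contra hne2
          rcases lt_or_gt_of_ne hne2 with h | h
          · have h1 := hhom p hp q hq h
            have h0 := hg'val p (hT (Finset.mem_coe.mp hp)) q (hT (Finset.mem_coe.mp hq)) h hpq
            rw [h0] at h1; exact absurd h1 (by decide)
          · have h1 := hhom q hq p hp h
            have h0 := hg'val q (hT (Finset.mem_coe.mp hq)) p (hT (Finset.mem_coe.mp hp)) h hpq.symm
            rw [h0] at h1; exact absurd h1 (by decide)
        have himg : T.image g' = Finset.range w := by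
          apply Finset.eq_of_subset_of_card_le
          · intro v hv
            obtain ⟨z, hz, rfl⟩ := Finset.mem_image.mp hv
            exact Finset.mem_range.mpr (hg'lt z (hT hz))
          · rw [Finset.card_range, Finset.card_image_of_injOn hinj, hcard]
        have : i ∈ T.image g' := by rw [himg]; exact Finset.mem_range.mpr hi
        obtain ⟨z, hz, hgz⟩ := Finset.mem_image.mp this
        exact ⟨z, hz, hgz⟩
      -- D i : elements of class i lying in some w-antichain of S'
      set D : ℕ → Finset ℕ := fun i => S'.filter
        (fun z => g' z = i ∧ ∃ T : Finset ℕ, T ⊆ S' ∧ Homog f 1 ↑T ∧ T.card = w ∧ z ∈ T)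
        with hD
      have hDne : ∀ i, i < w → (D i).Nonempty := by
        intro i hi
        obtain ⟨z, hz, hgz⟩ := meet T0 hT0sub hT0hom hT0card i hi
        exact ⟨z, Finset.mem_filter.mpr ⟨hT0sub hz, hgz, T0, hT0sub, hT0hom, hT0card, hz⟩⟩
      set a : ℕ → ℕ := fun i => if h : i < w then (D i).max' (hDne i h) else 0 with ha
      have haD : ∀ i, (h : i < w) → a i ∈ D i := by
        intro i h; simp only [ha, dif_pos h]; exact (D i).max'_mem _
      have haS' : ∀ i, i < w → a i ∈ S' := fun i h => (Finset.mem_filter.mp (haD i h)).1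
      have hagi : ∀ i, i < w → g' (a i) = i := fun i h =>
        (Finset.mem_filter.mp (haD i h)).2.1
      have hKey : ∀ i, i < w → ∀ z ∈ D i, z = a i ∨ (z < a i ∧ f z (a i) = 0) := by
        intro i hi z hz
        have hle : z ≤ a i := by
          simp only [ha, dif_pos hi]; exact (D i).le_max' z hz
        rcases eq_or_lt_of_le hle with h | h
        · exact Or.inl h
        · refine Or.inr ⟨h, ?_⟩
          have hzS' : z ∈ S' := (Finset.mem_filter.mp hz).1
          have hgz : g' z = i := (Finset.mem_filter.mp hz).2.1
          exact hg'val z hzS' (a i) (haS' i hi) h (by rw [hgz, hagi i hi])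
      -- the a i form an antichain
      have hAC : ∀ i, i < w → ∀ j, j < w → a i < a j → f (a i) (a j) = 1 := by
        intro i hi j hj hij
        rcases fin2_cases (f (a i) (a j)) with h0 | h1
        · exfalso
          obtain ⟨-, -, Tj, hTjsub, hTjhom, hTjcard, hajTj⟩ := Finset.mem_filter.mp (haD j hj)
          obtain ⟨z, hzTj, hgz⟩ := meet Tj hTjsub hTjhom hTjcard i hi
          have hzD : z ∈ D i := Finset.mem_filter.mpr
            ⟨hTjsub hzTj, hgz, Tj, hTjsub, hTjhom, hTjcard, hzTj⟩
          have hz' := hKey i hi z hzD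
          have hzaj : z < a j := by
            rcases hz' with rfl | ⟨hlt, _⟩
            · exact hij
            · exact hlt.trans hij
          have h1 : f z (a j) = 1 :=
            hTjhom z (Finset.mem_coe.mpr hzTj) (a j) (Finset.mem_coe.mpr hajTj) hzaj
          have h0' : f z (a j) = 0 := by
            rcases hz' with rfl | ⟨hlt, hf0⟩
            · exact h0
            · exact htrans z (a i) (a j) hlt hij hf0 h0
          rw [h0'] at h1; exact absurd h1 (by decide)
        · exact h1
      -- find i with a i ⊏ m
      have hexI : ∃ i, i < w ∧ f (a i) m = 0 := by
        by_contra hno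
        push_neg at hno
        have hall1 : ∀ i, i < w → f (a i) m = 1 := by
          intro i hi
          rcases fin2_cases (f (a i) m) with h0 | h1
          · exact absurd h0 (hno i hi)
          · exact h1
        set A : Finset ℕ := insert m ((Finset.range w).image a) with hA
        have hinj2 : Set.InjOn a ↑(Finset.range w) := by
          intro p hp q hq hpq
          have hp' := Finset.mem_range.mp (Finset.mem_coe.mp hp)
          have hq' := Finset.mem_range.mp (Finset.mem_coe.mp hq)
          rw [← hagi p hp', ← hagi q hq', hpq]
        have hmnot : m ∉ (Finset.range w).image a := by
          intro hmem
          obtain ⟨i, hi, hai⟩ := Finset.mem_image.mp hmem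
          have := hltm (a i) (haS' i (Finset.mem_range.mp hi))
          omega
        have hcardA : A.card = w + 1 := by
          rw [hA, Finset.card_insert_of_notMem hmnot,
            Finset.card_image_of_injOn hinj2, Finset.card_range]
        have hAsub : A ⊆ S := by
          intro x hx
          rcases Finset.mem_insert.mp hx with rfl | hx
          · exact hmS
          · obtain ⟨i, hi, rfl⟩ := Finset.mem_image.mp hx
            exact hS'sub (haS' i (Finset.mem_range.mp hi))
        have hAhom : Homog f 1 ↑A := by
          intro x hx y hy hxy
          have hx' := Finset.mem_coe.mp hx
          have hy' := Finset.mem_coe.mp hy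
          rcases Finset.mem_insert.mp hx' with rfl | hx2
          · exfalso
            rcases Finset.mem_insert.mp hy' with rfl | hy2
            · omega
            · obtain ⟨j, hj, rfl⟩ := Finset.mem_image.mp hy2
              have := hltm (a j) (haS' j (Finset.mem_range.mp hj))
              omega
          · obtain ⟨i, hi, rfl⟩ := Finset.mem_image.mp hx2
            rcases Finset.mem_insert.mp hy' with rfl | hy2
            · exact hall1 i (Finset.mem_range.mp hi)
            · obtain ⟨j, hj, rfl⟩ := Finset.mem_image.mp hy2
              exact hAC i (Finset.mem_range.mp hi) j (Finset.mem_range.mp hj) hxy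
        have := hbound A hAsub hAhom
        omega
      obtain ⟨i, hi, hfaim⟩ := hexI
      -- the chain K and the rest S₂
      set K : Finset ℕ := insert m (S'.filter (fun x => g' x = i ∧ x ≤ a i)) with hK
      have haim : a i < m := hltm (a i) (haS' i hi)
      have hKchain : ∀ x ∈ K, ∀ y ∈ K, x < y → f x y = 0 := by
        intro x hx y hy hxy
        rcases Finset.mem_insert.mp hx with rfl | hx2
        · exfalso
          rcases Finset.mem_insert.mp hy with rfl | hy2
          · omega
          · have := hltm y (Finset.mem_of_mem_filter y hy2); omega
        · obtain ⟨hxS', hgx, hxle⟩ := Finset.mem_filter.mp hx2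
          rcases Finset.mem_insert.mp hy with rfl | hy2
          · rcases eq_or_lt_of_le hxle with rfl | hlt
            · exact hfaim
            · have h0 : f x (a i) = 0 :=
                hg'val x hxS' (a i) (haS' i hi) hlt (by rw [hgx, hagi i hi])
              exact htrans x (a i) m hlt haim h0 hfaim
          · obtain ⟨hyS', hgy, _⟩ := Finset.mem_filter.mp hy2
            exact hg'val x hxS' y hyS' hxy (by rw [hgx, hgy])
      set S₂ := S \ K with hS₂
      have hS₂sub : S₂ ⊆ S' := by
        intro x hx
        obtain ⟨hxS, hxK⟩ := Finset.mem_sdiff.mp hx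
        refine Finset.mem_erase.mpr ⟨?_, hxS⟩
        intro h; exact hxK (h ▸ Finset.mem_insert_self m _)
      have hS₂card : S₂.card ≤ n := le_trans (Finset.card_le_card hS₂sub) hS'card
      have hbound₂ : ∀ T : Finset ℕ, T ⊆ S₂ → Homog f 1 ↑T → T.card ≤ w - 1 := by
        intro T hT hhom
        have hsub' : T ⊆ S' := hT.trans hS₂sub
        have hle := hbound' T hsub' hhom
        by_contra hgt
        have hcard : T.card = w := by omega
        obtain ⟨z, hzT, hgz⟩ := meet T hsub' hhom hcard i hi
        have hzD : z ∈ D i := Finset.mem_filter.mpr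
          ⟨hsub' hzT, hgz, T, hsub', hhom, hcard, hzT⟩
        have hzle : z ≤ a i := by
          rcases hKey i hi z hzD with rfl | ⟨hlt, _⟩
          · exact le_refl _
          · exact le_of_lt hlt
        have hzK : z ∈ K := Finset.mem_insert_of_mem
          (Finset.mem_filter.mpr ⟨hsub' hzT, hgz, hzle⟩)
        exact (Finset.mem_sdiff.mp (hT hzT)).2 hzK
      obtain ⟨g₂, hg₂lt, hg₂val⟩ := ih (w - 1) S₂ hS₂card hbound₂
      refine ⟨fun x => if x ∈ K then w - 1 else g₂ x, ?_, ?_⟩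
      · intro x hx
        by_cases hxK : x ∈ K
        · simp only [if_pos hxK]; omega
        · simp only [if_neg hxK]
          have := hg₂lt x (Finset.mem_sdiff.mpr ⟨hx, hxK⟩)
          omega
      · intro x hx y hy hxy heq
        by_cases hxK : x ∈ K <;> by_cases hyK : y ∈ K
        · exact hKchain x hxK y hyK hxy
        · exfalso
          simp only [if_pos hxK, if_neg hyK] at heq
          have := hg₂lt y (Finset.mem_sdiff.mpr ⟨hy, hyK⟩)
          omega
        · exfalso
          simp only [if_neg hxK, if_pos hyK] at heq
          have := hg₂lt x (Finset.mem_sdiff.mpr ⟨hx, hxK⟩)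
          omega
        · simp only [if_neg hxK, if_neg hyK] at heq
          exact hg₂val x (Finset.mem_sdiff.mpr ⟨hx, hxK⟩) y
            (Finset.mem_sdiff.mpr ⟨hy, hyK⟩) hxy heq
    · -- width of S' is at most w - 1
      have hb : ∀ T : Finset ℕ, T ⊆ S' → Homog f 1 ↑T → T.card ≤ w - 1 := by
        intro T hT hhom
        have h1 := hbound' T hT hhom
        by_contra hgt
        exact H ⟨T, hT, hhom, by omega⟩
      obtain ⟨g', hg'lt, hg'val⟩ := ih (w - 1) S' hS'card hb
      refine ⟨fun x => if x = m then w - 1 else g' x, ?_, ?_⟩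
      · intro x hx
        by_cases hxm : x = m
        · simp only [if_pos hxm]; omega
        · simp only [if_neg hxm]
          have := hg'lt x (Finset.mem_erase.mpr ⟨hxm, hx⟩)
          omega
      · intro x hx y hy hxy heq
        have hxm : x ≠ m := by
          intro h
          have := S.le_max' y hy
          omega
        by_cases hym : y = m
        · exfalso
          simp only [if_neg hxm, if_pos hym] at heq
          have := hg'lt x (Finset.mem_erase.mpr ⟨hxm, hx⟩)
          omega
        · simp only [if_neg hxm, if_neg hym] at heq
          exact hg'val x (Finset.mem_erase.mpr ⟨hxm, hx⟩) y
            (Finset.mem_erase.mpr ⟨hym, hy⟩) hxy heq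

theorem stmt_2 (k : ℕ) (f : ℕ → ℕ → Fin 2)
    (htrans : ∀ x y z : ℕ, x < y → y < z → f x y = 0 → f y z = 0 → f x z = 0)
    (hk : ¬ ∃ S : Finset ℕ, S.card = k ∧ Homog f 1 ↑S) :
    ∃ g : ℕ → ℕ, (∀ x, g x < k * (k + 1) / 2) ∧
      ∀ i < k * (k + 1) / 2, Homog f 0 {x | g x = i} := by
  classical
  -- dispatch small k
  rcases Nat.lt_or_ge k 2 with hk2 | hk2
  · exfalso
    apply hk
    interval_cases k
    · exact ⟨∅, by simp, by intro x hx; simp at hx⟩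
    · refine ⟨{0}, by simp, ?_⟩
      intro x hx y hy hxy
      simp only [Finset.coe_singleton, Set.mem_singleton_iff] at hx hy
      omega
  -- all 1-homogeneous finsets have size ≤ k - 1
  have hbound : ∀ T : Finset ℕ, Homog f 1 ↑T → T.card ≤ k - 1 := by
    intro T hhom
    by_contra h
    push_neg at h
    obtain ⟨T', hT'sub, hT'card⟩ := Finset.exists_subset_card_eq (s := T) (n := k) (by omega)
    exact hk ⟨T', hT'card, fun x hx y hy hxy =>
      hhom x (hT'sub (Finset.mem_coe.mp hx)) y (hT'sub (Finset.mem_coe.mp hy)) hxy⟩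
  have main := galvin f htrans
  have hcol : ∀ nn : ℕ, ∃ g : ℕ → ℕ, (∀ x ∈ Finset.range nn, g x < k - 1) ∧
      (∀ x ∈ Finset.range nn, ∀ y ∈ Finset.range nn, x < y → g x = g y → f x y = 0) :=
    fun nn => main (Finset.range nn).card (k - 1) (Finset.range nn) le_rfl
      (fun T _ hhom => hbound T hhom)
  choose G hGlt hGval using hcol
  set U : Ultrafilter ℕ := Filter.hyperfilter ℕ with hU
  have hcof : ∀ s : Set ℕ, sᶜ.Finite → s ∈ U := by
    intro s hs
    exact Filter.hyperfilter_le_cofinite hs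
  have hex : ∀ x : ℕ, ∃ b, b < k - 1 ∧ {n | G n x = b} ∈ U := by
    intro x
    by_contra hcon
    push_neg at hcon
    have h1 : ∀ b ∈ Finset.range (k - 1), {n : ℕ | G n x ≠ b} ∈ U := by
      intro b hb
      have := hcon b (Finset.mem_range.mp hb)
      have hcompl : {n : ℕ | G n x = b}ᶜ ∈ U := Ultrafilter.compl_mem_iff_notMem.mpr this
      exact hcompl
    have h2 : (⋂ b ∈ Finset.range (k - 1), {n : ℕ | G n x ≠ b}) ∈ U :=
      (Filter.biInter_finset_mem _).mpr h1
    have h3 : {n : ℕ | x < n} ∈ U := by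
      apply hcof
      have : {n : ℕ | x < n}ᶜ ⊆ Set.Iic x := by
        intro n hn
        simp only [Set.mem_compl_iff, Set.mem_setOf_eq, not_lt] at hn
        exact hn
      exact (Set.finite_Iic x).subset this
    obtain ⟨n, hn⟩ := Filter.nonempty_of_mem (Filter.inter_mem h2 h3)
    obtain ⟨hn1, hn2⟩ := hn
    simp only [Set.mem_iInter, Set.mem_setOf_eq] at hn1 hn2
    have hGn := hGlt n x (Finset.mem_range.mpr hn2)
    exact hn1 (G n x) (Finset.mem_range.mpr hGn) rfl
  choose g hglt hgU using hex
  have hkC : k - 1 < k * (k + 1) / 2 := by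
    have h2 : k ≤ k * (k + 1) / 2 := by
      rw [Nat.le_div_iff_mul_le (by norm_num)]
      nlinarith
    omega
  refine ⟨g, fun x => lt_of_lt_of_le (hglt x) (le_of_lt hkC), ?_⟩
  intro i _ x hx y hy hxy
  have hgx : g x = i := hx
  have hgy : g y = i := hy
  have N1 : {n : ℕ | G n x = g x} ∈ U := hgU x
  have N2 : {n : ℕ | G n y = g y} ∈ U := hgU y
  have N3 : {n : ℕ | y < n} ∈ U := by
    apply hcof
    have : {n : ℕ | y < n}ᶜ ⊆ Set.Iic y := by
      intro n hn
      simp only [Set.mem_compl_iff, Set.mem_setOf_eq, not_lt] at hn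
      exact hn
    exact (Set.finite_Iic y).subset this
  obtain ⟨n, hn⟩ := Filter.nonempty_of_mem (Filter.inter_mem (Filter.inter_mem N1 N2) N3)
  obtain ⟨⟨hn1, hn2⟩, hn3⟩ := hn
  simp only [Set.mem_setOf_eq] at hn1 hn2 hn3
  exact hGval n x (Finset.mem_range.mpr (by omega)) y (Finset.mem_range.mpr hn3) hxy
    (by rw [hn1, hn2, hgx, hgy])
end

section
/- Let P = (ℕ, <_P) be a partial order of height at most h, meaning every <_P-chain has size at most h. Define g₀(x) to be the length minus one of the longest sequence x₀ < x₁ < ... < x_s = x that is simultaneously strictly increasing in ℕ and strictly increasing in <_P, and g₁(x) analogously with <_P-decreasing in place of <_P-increasing. Then for every pair (i,j) with i,j < h, the set {x : g₀(x) = i and g₁(x) = j} is a <_P-antichain. Consequently ℕ can be partitioned into at most h² antichains. -/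
theorem stmt_3 (r : ℕ → ℕ → Prop)
    (hirr : ∀ x, ¬ r x x) (htrans : ∀ x y z, r x y → r y z → r x z)
    (h : ℕ)
    (hheight : ∀ S : Finset ℕ, (∀ x ∈ S, ∀ y ∈ S, x ≠ y → r x y ∨ r y x) → S.card ≤ h)
    (g₀ g₁ : ℕ → ℕ)
    (hg₀ : ∀ x, IsGreatest {s | ∃ l : List ℕ, l.length = s + 1 ∧
      l.Chain' (· < ·) ∧ l.Chain' r ∧ l.getLast? = some x} (g₀ x))
    (hg₁ : ∀ x, IsGreatest {s | ∃ l : List ℕ, l.length = s + 1 ∧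
      l.Chain' (· < ·) ∧ l.Chain' (fun a b => r b a) ∧ l.getLast? = some x} (g₁ x)) :
    (∀ i < h, ∀ j < h, ∀ x y : ℕ, g₀ x = i → g₁ x = j → g₀ y = i → g₁ y = j → ¬ r x y) ∧
    ∃ g : ℕ → ℕ, (∀ x, g x < h * h) ∧
      ∀ c : ℕ, ∀ x y : ℕ, g x = c → g y = c → ¬ r x y := by
  haveI instT : IsTrans ℕ r := ⟨fun a b c => htrans a b c⟩
  haveI instT' : IsTrans ℕ (fun a b => r b a) := ⟨fun a b c hab hbc => htrans c b a hbc hab⟩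
  -- key antichain lemma
  have key : ∀ x y : ℕ, g₀ x = g₀ y → g₁ x = g₁ y → ¬ r x y := by
    intro x y h0 h1 hr
    have hne : x ≠ y := by rintro rfl; exact hirr x hr
    rcases lt_or_gt_of_ne hne with hlt | hlt
    · obtain ⟨l, hl1, hl2, hl3, hl4⟩ := (hg₀ x).1
      have hmem : g₀ x + 1 ∈ {s | ∃ l : List ℕ, l.length = s + 1 ∧
          l.Chain' (· < ·) ∧ l.Chain' r ∧ l.getLast? = some y} := by
        refine ⟨l ++ [y], by simp [hl1], ?_, ?_, List.getLast?_concat⟩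
        · show List.IsChain _ _
          rw [List.isChain_append]
          refine ⟨hl2, List.isChain_singleton _, ?_⟩
          intro a ha b hb
          simp only [List.head?_cons, Option.mem_some_iff] at hb
          rw [hl4, Option.mem_some_iff] at ha
          subst ha; subst hb; exact hlt
        · show List.IsChain _ _
          rw [List.isChain_append]
          refine ⟨hl3, List.isChain_singleton _, ?_⟩
          intro a ha b hb
          simp only [List.head?_cons, Option.mem_some_iff] at hb
          rw [hl4, Option.mem_some_iff] at ha
          subst ha; subst hb; exact hr
      have := (hg₀ y).2 hmem
      omega
    · obtain ⟨l, hl1, hl2, hl3, hl4⟩ := (hg₁ y).1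
      have hmem : g₁ y + 1 ∈ {s | ∃ l : List ℕ, l.length = s + 1 ∧
          l.Chain' (· < ·) ∧ l.Chain' (fun a b => r b a) ∧ l.getLast? = some x} := by
        refine ⟨l ++ [x], by simp [hl1], ?_, ?_, List.getLast?_concat⟩
        · show List.IsChain _ _
          rw [List.isChain_append]
          refine ⟨hl2, List.isChain_singleton _, ?_⟩
          intro a ha b hb
          simp only [List.head?_cons, Option.mem_some_iff] at hb
          rw [hl4, Option.mem_some_iff] at ha
          subst ha; subst hb; exact hlt
        · show List.IsChain _ _
          rw [List.isChain_append]
          refine ⟨hl3, List.isChain_singleton _, ?_⟩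
          intro a ha b hb
          simp only [List.head?_cons, Option.mem_some_iff] at hb
          rw [hl4, Option.mem_some_iff] at ha
          subst ha; subst hb; exact hr
      have := (hg₁ x).2 hmem
      omega
  -- boundedness
  have bound : ∀ (f : ℕ → ℕ) (r' : ℕ → ℕ → Prop), (∀ a b, r' a b → r a b ∨ r b a) →
      (∀ x, ∃ l : List ℕ, l.length = f x + 1 ∧ l.Chain' (· < ·) ∧ l.Chain' r' ∧
        l.getLast? = some x) → [IsTrans ℕ r'] → ∀ x, f x < h := by
    intro f r' himp hw _ x
    obtain ⟨l, hl1, hl2, hl3, _⟩ := hw x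
    have hndup : l.Nodup := (List.isChain_iff_pairwise.mp hl2).imp ne_of_lt
    have hp : l.Pairwise fun a b => r a b ∨ r b a :=
      (List.isChain_iff_pairwise.mp hl3).imp (fun hab => himp _ _ hab)
    have hsymm : Symmetric fun a b : ℕ => r a b ∨ r b a := fun a b hab => hab.symm
    have hcard := hheight l.toFinset (by
      intro a ha b hb hab
      rw [List.mem_toFinset] at ha hb
      haveI : Std.Symm (fun a b : ℕ => r a b ∨ r b a) := ⟨fun a b hab => hsymm hab⟩
      exact hp.forall ha hb hab)
    rw [List.toFinset_card_of_nodup hndup, hl1] at hcard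
    omega
  have b0 : ∀ x, g₀ x < h := bound g₀ r (fun a b hab => Or.inl hab) (fun x => (hg₀ x).1)
  have b1 : ∀ x, g₁ x < h := bound g₁ (fun a b => r b a) (fun a b hab => Or.inr hab)
    (fun x => (hg₁ x).1)
  constructor
  · intro i _ j _ x y hx0 hx1 hy0 hy1
    exact key x y (hx0.trans hy0.symm) (hx1.trans hy1.symm)
  · refine ⟨fun x => g₀ x * h + g₁ x, ?_, ?_⟩
    · intro x
      have h0 := b0 x; have h1 := b1 x
      calc g₀ x * h + g₁ x < g₀ x * h + h := by omega
        _ = (g₀ x + 1) * h := by ring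
        _ ≤ h * h := Nat.mul_le_mul_right h (by omega)
    · intro c x y hx hy
      simp only at hx hy
      have heq : g₀ x * h + g₁ x = g₀ y * h + g₁ y := by omega
      have h1x := b1 x; have h1y := b1 y
      have e0 : g₀ x = g₀ y := by
        rcases lt_trichotomy (g₀ x) (g₀ y) with hl | he | hl
        · nlinarith
        · exact he
        · nlinarith
      have e1 : g₁ x = g₁ y := by
        rw [e0] at heq; omega
      exact key x y e0 e1
end

section
/- Suppose f : [ℕ]² → 2 is a coloring such that there is no f-homogeneous set of size k for color 1, and suppose X = {x₀ < x₁ < ...} is an infinite set such that the induced coloring h(a,b) = f(x_a, x_b) is transitive for both colors (for each c < 2: h(a,b) = h(b,c') = c implies h(a,c') = c for a < b < c'). Then there exists an infinite f-homogeneous set for color 0. -/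
/-- Height of `n` in the color-1 order induced on indices. -/
def ht (f : ℕ → ℕ → Fin 2) (x : ℕ → ℕ) (n : ℕ) : ℕ :=
  (((Finset.range n).filter (fun m => f (x m) (x n) = 1)).attach).sup
    (fun m => ht f x m.1 + 1)
termination_by n
decreasing_by exact Finset.mem_range.mp (Finset.mem_filter.mp m.2).1

lemma fin2cases (c : Fin 2) : c = 0 ∨ c = 1 := by fin_cases c <;> simp

lemma ht_succ_le (f : ℕ → ℕ → Fin 2) (x : ℕ → ℕ) {a b : ℕ} (hab : a < b)
    (h1 : f (x a) (x b) = 1) : ht f x a + 1 ≤ ht f x b := by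
  conv_rhs => rw [ht]
  have hmem : a ∈ (Finset.range b).filter (fun m => f (x m) (x b) = 1) := by
    simp [hab, h1]
  exact Finset.le_sup
    (s := ((Finset.range b).filter (fun m => f (x m) (x b) = 1)).attach)
    (f := fun m => ht f x m.1 + 1) (b := ⟨a, hmem⟩) (Finset.mem_attach _ _)

lemma chain_ex (f : ℕ → ℕ → Fin 2) (x : ℕ → ℕ)
    (htr : ∀ a b d : ℕ, a < b → b < d →
      f (x a) (x b) = 1 → f (x b) (x d) = 1 → f (x a) (x d) = 1) :
    ∀ n, ∃ S : Finset ℕ, S.card = ht f x n + 1 ∧ n ∈ S ∧ (∀ m ∈ S, m ≤ n) ∧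
      ∀ a ∈ S, ∀ b ∈ S, a < b → f (x a) (x b) = 1 := by
  intro n
  induction n using Nat.strong_induction_on with
  | _ n ih =>
    set F := (Finset.range n).filter (fun m => f (x m) (x n) = 1) with hF
    by_cases hFne : F.Nonempty
    · obtain ⟨m, _, hsup⟩ := Finset.exists_mem_eq_sup F.attach
        (Finset.attach_nonempty_iff.mpr hFne) (fun m => ht f x m.1 + 1)
      have hmF : m.1 ∈ F := m.2
      have hmlt : m.1 < n := Finset.mem_range.mp (Finset.mem_filter.mp hmF).1
      have hm1 : f (x m.1) (x n) = 1 := (Finset.mem_filter.mp hmF).2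
      have hhtn : ht f x n = ht f x m.1 + 1 := by rw [ht]; exact hsup
      obtain ⟨S', hcard, hmS', hle, hchain⟩ := ih m.1 hmlt
      have hnS' : n ∉ S' := fun h => absurd (hle n h) (by omega)
      refine ⟨insert n S', ?_, Finset.mem_insert_self _ _, ?_, ?_⟩
      · rw [Finset.card_insert_of_notMem hnS', hcard, hhtn]
      · intro a ha
        rcases Finset.mem_insert.mp ha with h | h
        · omega
        · exact le_of_lt (lt_of_le_of_lt (hle a h) hmlt)
      · intro a ha b hb hab
        rcases Finset.mem_insert.mp ha with ha' | ha'
        · rcases Finset.mem_insert.mp hb with hb' | hb'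
          · omega
          · have := hle b hb'; omega
        · rcases Finset.mem_insert.mp hb with hb' | hb'
          · rcases eq_or_lt_of_le (hle a ha') with h | h
            · rw [hb', h]; exact hm1
            · rw [hb']; exact htr a m.1 n h hmlt (hchain a ha' m.1 hmS' h) hm1
          · exact hchain a ha' b hb' hab
    · have hF0 : F = ∅ := Finset.not_nonempty_iff_eq_empty.mp hFne
      have : ht f x n = 0 := by rw [ht, ← hF, hF0]; simp
      exact ⟨{n}, by simp [this], by simp, by simp, by simp⟩

theorem stmt_7 (f : ℕ → ℕ → Fin 2) (k : ℕ)
    (hk : ¬ ∃ S : Finset ℕ, S.card = k ∧ Homog f 1 ↑S)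
    (x : ℕ → ℕ) (hx : StrictMono x)
    (htrans : ∀ c : Fin 2, ∀ a b d : ℕ, a < b → b < d →
      f (x a) (x b) = c → f (x b) (x d) = c → f (x a) (x d) = c) :
    ∃ H : Set ℕ, H.Infinite ∧ Homog f 0 H := by
  -- k = 0 is impossible
  rcases Nat.eq_zero_or_pos k with hk0 | hkpos
  · exact absurd ⟨∅, by simp [hk0], by intro a ha; simp at ha⟩ hk
  -- every height is < k
  have hlt : ∀ n, ht f x n < k := by
    intro n
    by_contra hge
    push_neg at hge
    obtain ⟨S, hcard, _, _, hchain⟩ := chain_ex f x (htrans 1) n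
    have hkc : k ≤ S.card := by omega
    obtain ⟨T, hTS, hTcard⟩ := Finset.exists_subset_card_eq hkc
    refine hk ⟨T.image x, ?_, ?_⟩
    · rw [Finset.card_image_of_injective _ hx.injective, hTcard]
    · intro u hu v hv huv
      simp only [Finset.coe_image, Set.mem_image, Finset.mem_coe] at hu hv
      obtain ⟨a, ha, rfl⟩ := hu
      obtain ⟨b, hb, rfl⟩ := hv
      exact hchain a (hTS ha) b (hTS hb) (hx.lt_iff_lt.mp huv)
  -- pigeonhole on heights
  have : ∃ j : Fin k, Infinite ((fun n => (⟨ht f x n, hlt n⟩ : Fin k)) ⁻¹' {j}) :=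
    Finite.exists_infinite_fiber _
  obtain ⟨j, hj⟩ := this
  set A : Set ℕ := (fun n => (⟨ht f x n, hlt n⟩ : Fin k)) ⁻¹' {j} with hA
  have hAinf : A.Infinite := Set.infinite_coe_iff.mp hj
  refine ⟨x '' A, hAinf.image (Set.injOn_of_injective hx.injective), ?_⟩
  intro u hu v hv huv
  obtain ⟨a, ha, rfl⟩ := hu
  obtain ⟨b, hb, rfl⟩ := hv
  have hab : a < b := hx.lt_iff_lt.mp huv
  have hht : ht f x a = ht f x b := by
    have ha' : (⟨ht f x a, hlt a⟩ : Fin k) = j := ha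
    have hb' : (⟨ht f x b, hlt b⟩ : Fin k) = j := hb
    rw [← hb'] at ha'
    exact Fin.mk.injEq .. ▸ (by injection ha')
  rcases fin2cases (f (x a) (x b)) with h | h
  · exact h
  · have := ht_succ_le f x hab h
    omega
end

section
/- Let L = (ℕ, <_L) be a linear order. Call x ∈ ℕ small if {y : y <_L x} is finite, and large if {y : x <_L y} is finite. Suppose every element of ℕ is small or large (L is stable). If the set of small elements is infinite, then there exists an infinite <_L-ascending sequence; if the set of large elements is infinite, then there exists an infinite <_L-descending sequence. In particular, every stable linear order on ℕ admits an infinite ascending or descending sequence. -/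
lemma sads_aux (r : ℕ → ℕ → Prop)
    (htot : ∀ x y : ℕ, x ≠ y → r x y ∨ r y x)
    (h : {x : ℕ | {y | r y x}.Finite}.Infinite) :
    ∃ a : ℕ → ℕ, ∀ n, r (a n) (a (n + 1)) := by
  set S := {x : ℕ | {y | r y x}.Finite} with hS
  have step : ∀ x : S, ∃ y : S, r x.val y.val := by
    rintro ⟨x, hx⟩
    have hinf : (S \ ({y | r y x} ∪ {x})).Infinite :=
      h.diff (hx.union (Set.finite_singleton x))
    obtain ⟨y, hyS, hy⟩ := hinf.nonempty
    have hne : x ≠ y := fun e => hy (Or.inr e.symm)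
    rcases htot x y hne with hr | hr
    · exact ⟨⟨y, hyS⟩, hr⟩
    · exact absurd (Or.inl hr) hy
  choose g hg using step
  obtain ⟨x0, hx0⟩ := h.nonempty
  refine ⟨fun n => (g^[n] ⟨x0, hx0⟩).val, fun n => ?_⟩
  show r (g^[n] ⟨x0, hx0⟩).val (g^[n+1] ⟨x0, hx0⟩).val
  rw [Function.iterate_succ_apply']
  exact hg _

theorem stmt_11 (r : ℕ → ℕ → Prop)
    (hirr : ∀ x, ¬ r x x) (htrans : ∀ x y z, r x y → r y z → r x z)
    (htot : ∀ x y : ℕ, x ≠ y → r x y ∨ r y x)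
    (hstable : ∀ x : ℕ, {y | r y x}.Finite ∨ {y | r x y}.Finite) :
    ({x : ℕ | {y | r y x}.Finite}.Infinite → ∃ a : ℕ → ℕ, ∀ n, r (a n) (a (n + 1))) ∧
    ({x : ℕ | {y | r x y}.Finite}.Infinite → ∃ a : ℕ → ℕ, ∀ n, r (a (n + 1)) (a n)) ∧
    (∃ a : ℕ → ℕ, (∀ n, r (a n) (a (n + 1))) ∨ (∀ n, r (a (n + 1)) (a n))) := by
  have hasc := sads_aux r htot
  have hdesc := sads_aux (fun x y => r y x) (fun x y hne => htot y x (Ne.symm hne))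
  refine ⟨hasc, hdesc, ?_⟩
  by_cases hfin : {x : ℕ | {y | r y x}.Finite}.Infinite
  · obtain ⟨a, ha⟩ := hasc hfin
    exact ⟨a, Or.inl ha⟩
  · have hfin' : {x : ℕ | {y | r x y}.Finite}.Infinite := by
      rw [Set.not_infinite] at hfin
      intro hcon
      have : (Set.univ : Set ℕ).Finite := by
        refine Set.Finite.subset (hfin.union hcon) ?_
        intro x _
        rcases hstable x with h | h
        · exact Or.inl h
        · exact Or.inr h
      exact Set.infinite_univ this
    obtain ⟨a, ha⟩ := hdesc hfin'
    exact ⟨a, Or.inr ha⟩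
end

section
/- Let L be a stable linear order on ℕ with U⁰ the small elements and U¹ the large elements. Suppose (σ⁰, σ¹) satisfies σ⁰ ⊆ U⁰, σ¹ ⊆ U¹, σ⁰ is <_L-ascending, σ¹ is <_L-descending, and (τ⁰, τ¹) is a split pair extending it (σ⁰ is a prefix of τ⁰, σ¹ is a prefix of τ¹). Then either (τ⁰, σ¹) or (σ⁰, τ¹) again satisfies the condition property: i.e., τ⁰ ⊆ U⁰ or τ¹ ⊆ U¹. -/
lemma aux_last {α : Type*} {r : α → α → Prop} (htrans : Transitive r)
    {l : List α} (hc : l.Chain' r) (h : l ≠ []) {x : α} (hx : x ∈ l) :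
    x = l.getLast h ∨ r x (l.getLast h) := by
  haveI : IsTrans α r := ⟨fun _ _ _ h1 h2 => htrans h1 h2⟩
  have hp : l.Pairwise r := List.isChain_iff_pairwise.mp hc
  rw [← l.dropLast_append_getLast h] at hp hx
  rw [List.pairwise_append] at hp
  rcases List.mem_append.mp hx with h1 | h1
  · exact Or.inr (hp.2.2 x h1 _ (List.mem_singleton_self _))
  · exact Or.inl (List.mem_singleton.mp h1)

theorem stmt_13 (r : ℕ → ℕ → Prop)
    (hirr : ∀ x, ¬ r x x) (htrans : ∀ x y z, r x y → r y z → r x z)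
    (htot : ∀ x y : ℕ, x ≠ y → r x y ∨ r y x)
    (hstable : ∀ x : ℕ, {y | r y x}.Finite ∨ {y | r x y}.Finite)
    (σ0 σ1 τ0 τ1 : List ℕ)
    (hσ0asc : σ0.Chain' r) (hσ1desc : σ1.Chain' (fun a b => r b a))
    (hσ0U : ∀ x ∈ σ0, {y | r y x}.Finite) (hσ1U : ∀ x ∈ σ1, {y | r x y}.Finite)
    (hpre0 : σ0 <+: τ0) (hpre1 : σ1 <+: τ1)
    (hτ0asc : τ0.Chain' r) (hτ1desc : τ1.Chain' (fun a b => r b a))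
    (hn0 : τ0 ≠ []) (hn1 : τ1 ≠ [])
    (hsplit : r (τ0.getLast hn0) (τ1.getLast hn1)) :
    (∀ x ∈ τ0, {y | r y x}.Finite) ∨ (∀ x ∈ τ1, {y | r x y}.Finite) := by
  set a := τ0.getLast hn0 with ha
  set b := τ1.getLast hn1 with hb
  rcases hstable a with hfa | hfa
  · left
    intro x hx
    rcases aux_last (fun {p q s} h1 h2 => htrans p q s h1 h2) hτ0asc hn0 hx with rfl | hxa
    · exact hfa
    · exact hfa.subset (fun y hy => htrans _ _ _ hy hxa)
  · right
    intro x hx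
    have hflip : Transitive (fun a b => r b a) := fun {p q s} h1 h2 => htrans _ _ _ h2 h1
    rcases aux_last hflip hτ1desc hn1 hx with rfl | hbx
    · exact hfa.subset (fun y hy => htrans _ _ _ hsplit hy)
    · exact hfa.subset (fun y hy => htrans _ _ _ hsplit (htrans _ _ _ hbx hy))
end
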